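/- The functions g and h are componentwise nondecreasing on their domain of definition: if 0 ≤ x₁ ≤ x₂ and 0 ≤ y₁ ≤ y₂ and ℙ[E(x₂,y₂)] > 0 (hence also ℙ[E(x₁,y₁)] > 0), then g(x₁,y₁) ≤ g(x₂,y₂) and h(x₁,y₁) ≤ h(x₂,y₂). -/

import Mathlib

open MeasureTheory ProbabilityTheory

variable {Ω : Type*} [MeasureSpace Ω]

/-- The survival event `E(x,y) = {S_A > x + β_B·y} ∩ {S_B > y + β_A·x}`. -/
def survEvent (SA SB : Ω → ℝ) (βA βB x y : ℝ) : Set Ω :=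
  {ω | x + βB * y < SA ω} ∩ {ω | y + βA * x < SB ω}

/-- `g(x,y) = (𝔼[L] − (1−p)·𝔼[L·1_{E(x,y)}]) / ((1−p)·ℙ[E(x,y)])`; with `L = L_A` this is the
function `g` of the paper, with `L = L_B` it is the function `h`. -/
noncomputable def gFun (L SA SB : Ω → ℝ) (βA βB p x y : ℝ) : ℝ :=
  ((∫ ω, L ω) - (1 - p) * ∫ ω in survEvent SA SB βA βB x y, L ω) /
    ((1 - p) * ((ℙ : Measure Ω) (survEvent SA SB βA βB x y)).toReal)

/-- The set 𝒫 of stable points. -/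
noncomputable def stableSet (LA LB SA SB : Ω → ℝ) (βA βB p : ℝ) : Set (ℝ × ℝ) :=
  {q | 0 ≤ q.1 ∧ 0 ≤ q.2 ∧ 0 < (ℙ : Measure Ω) (survEvent SA SB βA βB q.1 q.2) ∧
    gFun LA SA SB βA βB p q.1 q.2 ≤ q.1 ∧ gFun LB SA SB βA βB p q.1 q.2 ≤ q.2}
lemma survEvent_measurable (SA SB : Ω → ℝ) (hSA : Measurable SA) (hSB : Measurable SB)
    (βA βB x y : ℝ) : MeasurableSet (survEvent SA SB βA βB x y) :=
  ((measurableSet_lt measurable_const hSA).inter (measurableSet_lt measurable_const hSB))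

lemma ratio_mono [IsProbabilityMeasure (ℙ : Measure Ω)]
    (L : Ω → ℝ) (hL0 : ∀ ω, 0 ≤ L ω) (hL : Integrable L (ℙ : Measure Ω))
    {E₁ E₂ : Set Ω} (h₁ : MeasurableSet E₁) (h₂ : MeasurableSet E₂)
    (hsub : E₂ ⊆ E₁) (hq₂ : 0 < (ℙ : Measure Ω) E₂) {p : ℝ} (hp0 : 0 ≤ p) (hp1 : p < 1) :
    ((∫ ω, L ω) - (1 - p) * ∫ ω in E₁, L ω) / ((1 - p) * ((ℙ : Measure Ω) E₁).toReal) ≤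
    ((∫ ω, L ω) - (1 - p) * ∫ ω in E₂, L ω) / ((1 - p) * ((ℙ : Measure Ω) E₂).toReal) := by
  set t : ℝ := 1 - p with htdef
  have ht : 0 < t := by linarith
  have ht1 : t ≤ 1 := by linarith
  set I : ℝ := ∫ ω, L ω with hIdef
  set a₁ : ℝ := ∫ ω in E₁, L ω with ha₁def
  set a₂ : ℝ := ∫ ω in E₂, L ω with ha₂def
  set r₁ : ℝ := ((ℙ : Measure Ω) E₁).toReal with hr₁def
  set r₂ : ℝ := ((ℙ : Measure Ω) E₂).toReal with hr₂def
  have hq₁ : 0 < (ℙ : Measure Ω) E₁ := lt_of_lt_of_le hq₂ (measure_mono hsub)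
  have hr₂pos : 0 < r₂ := ENNReal.toReal_pos hq₂.ne' (measure_ne_top _ _)
  have hr₁pos : 0 < r₁ := ENNReal.toReal_pos hq₁.ne' (measure_ne_top _ _)
  have hr : r₂ ≤ r₁ := ENNReal.toReal_mono (measure_ne_top _ _) (measure_mono hsub)
  have ha₂nn : 0 ≤ a₂ := setIntegral_nonneg h₂ fun ω _ => hL0 ω
  have ha : a₂ ≤ a₁ :=
    setIntegral_mono_set hL.integrableOn (Filter.Eventually.of_forall hL0)
      (HasSubset.Subset.eventuallyLE hsub)
  have ha₁I : a₁ ≤ I := by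
    have := setIntegral_mono_set hL.integrableOn (Filter.Eventually.of_forall hL0)
      (HasSubset.Subset.eventuallyLE (Set.subset_univ E₁))
    simpa [setIntegral_univ] using this
  have hInn : 0 ≤ I := integral_nonneg hL0
  rw [div_le_div_iff₀ (by positivity) (by positivity)]
  nlinarith [mul_nonneg (sub_nonneg.2 hr) (sub_nonneg.2 (le_trans ha ha₁I)),
    mul_nonneg (mul_nonneg ht.le hr₂pos.le) (sub_nonneg.2 ha),
    mul_nonneg (mul_nonneg (sub_nonneg.2 ht1) ha₂nn) (sub_nonneg.2 hr),
    mul_pos ht hr₂pos, mul_nonneg ht.le (mul_nonneg (sub_nonneg.2 hr) (sub_nonneg.2 (le_trans ha ha₁I))),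
    mul_nonneg ht.le (mul_nonneg (mul_nonneg ht.le hr₂pos.le) (sub_nonneg.2 ha)),
    mul_nonneg ht.le (mul_nonneg (mul_nonneg (sub_nonneg.2 ht1) ha₂nn) (sub_nonneg.2 hr))]

theorem stmt1 [IsProbabilityMeasure (ℙ : Measure Ω)]
    (LA LB SA SB : Ω → ℝ)
    (hLA0 : ∀ ω, 0 ≤ LA ω) (hLB0 : ∀ ω, 0 ≤ LB ω)
    (hLA : Integrable LA (ℙ : Measure Ω)) (hLB : Integrable LB (ℙ : Measure Ω))
    (hSA : Measurable SA) (hSB : Measurable SB)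
    (βA βB : ℝ) (hβA : 0 ≤ βA) (hβB : 0 ≤ βB)
    (p : ℝ) (hp0 : 0 < p) (hp1 : p < 1)
    (x₁ x₂ y₁ y₂ : ℝ) (hx₁ : 0 ≤ x₁) (hx : x₁ ≤ x₂) (hy₁ : 0 ≤ y₁) (hy : y₁ ≤ y₂)
    (hpos : 0 < (ℙ : Measure Ω) (survEvent SA SB βA βB x₂ y₂)) :
    gFun LA SA SB βA βB p x₁ y₁ ≤ gFun LA SA SB βA βB p x₂ y₂ ∧
    gFun LB SA SB βA βB p x₁ y₁ ≤ gFun LB SA SB βA βB p x₂ y₂ := by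
  have hsub : survEvent SA SB βA βB x₂ y₂ ⊆ survEvent SA SB βA βB x₁ y₁ := by
    rintro ω ⟨h1, h2⟩
    simp only [Set.mem_setOf_eq] at h1 h2 ⊢
    constructor
    · exact lt_of_le_of_lt (by nlinarith [mul_le_mul_of_nonneg_left hy hβB]) h1
    · exact lt_of_le_of_lt (by nlinarith [mul_le_mul_of_nonneg_left hx hβA]) h2
  have h₁ := survEvent_measurable SA SB hSA hSB βA βB x₁ y₁
  have h₂ := survEvent_measurable SA SB hSA hSB βA βB x₂ y₂
  exact ⟨ratio_mono LA hLA0 hLA h₁ h₂ hsub hpos hp0.le hp1,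
    ratio_mono LB hLB0 hLB h₁ h₂ hsub hpos hp0.le hp1⟩
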